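/- Let p be a prime, m ≥ 1 and n = 2m+1. The centralizer of S_n in U_n(F_p) is exactly the set of g ∈ U_n(F_p) such that g_{ij} = 0 for all i < j with j ≤ m or i ≥ m+2; that is, the unipotent matrices whose off-diagonal nonzero entries all lie in the top-right (m+1)×(m+1) corner (rows 1,…,m+1, columns m+1,…,2m+1). -/

import Mathlib

/-- `g` is an upper unitriangular matrix. -/
def IsUni {n : ℕ} {R : Type*} [CommRing R] (g : Matrix (Fin n) (Fin n) R) : Prop :=
  (∀ i, g i i = 1) ∧ ∀ i j : Fin n, (j : ℕ) < (i : ℕ) → g i j = 0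

/-- `ι(h)`: the identity matrix except that its top right `m × m` block
(rows `1,…,m` and columns `m+2,…,2m+1`, in one-based indexing) is `h`. -/
def iota (p m : ℕ) (h : Matrix (Fin m) (Fin m) (ZMod p)) :
    Matrix (Fin (2 * m + 1)) (Fin (2 * m + 1)) (ZMod p) :=
  Matrix.of fun i j =>
    (if i = j then 1 else 0) +
      if hij : (i : ℕ) < m ∧ m + 1 ≤ (j : ℕ) then
        h ⟨i, hij.1⟩ ⟨(j : ℕ) - (m + 1), by have := j.isLt; omega⟩
      else 0

/-- The strictly-upper part of `iota`. -/
def Emat (p m : ℕ) (h : Matrix (Fin m) (Fin m) (ZMod p)) :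
    Matrix (Fin (2 * m + 1)) (Fin (2 * m + 1)) (ZMod p) :=
  Matrix.of fun i j =>
    if hij : (i : ℕ) < m ∧ m + 1 ≤ (j : ℕ) then
      h ⟨i, hij.1⟩ ⟨(j : ℕ) - (m + 1), by have := j.isLt; omega⟩
    else 0

lemma iota_eq (p m : ℕ) (h : Matrix (Fin m) (Fin m) (ZMod p)) :
    iota p m h = 1 + Emat p m h := by
  ext i j
  simp [iota, Emat, Matrix.one_apply, Matrix.add_apply]

lemma Emat_std (p m : ℕ) (a b : Fin m) :
    Emat p m (Matrix.single a b (1 : ZMod p)) =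
      Matrix.single (⟨a, by omega⟩ : Fin (2 * m + 1))
        (⟨(b : ℕ) + m + 1, by omega⟩ : Fin (2 * m + 1)) 1 := by
  ext i j
  simp only [Emat, Matrix.of_apply, Matrix.single, Fin.ext_iff]
  split_ifs with h1 h2 h3 h3 <;> simp_all <;> omega

theorem stmt_3 (p m : ℕ) (hp : p.Prime) (hm : 1 ≤ m) :
    {g : Matrix (Fin (2 * m + 1)) (Fin (2 * m + 1)) (ZMod p) | IsUni g ∧
        ∀ h : Matrix (Fin m) (Fin m) (ZMod p), g * iota p m h = iota p m h * g} =
      {g : Matrix (Fin (2 * m + 1)) (Fin (2 * m + 1)) (ZMod p) | IsUni g ∧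
        ∀ i j : Fin (2 * m + 1), (i : ℕ) < (j : ℕ) →
          ((j : ℕ) + 1 ≤ m ∨ m + 2 ≤ (i : ℕ) + 1) → g i j = 0} := by
  ext g
  simp only [Set.mem_setOf_eq]
  constructor
  · rintro ⟨hg, hc⟩
    refine ⟨hg, ?_⟩
    intro i j hij hor
    have hcE : ∀ h, g * Emat p m h = Emat p m h * g := by
      intro h
      have := hc h
      rw [iota_eq, mul_add, add_mul, mul_one, one_mul] at this
      exact add_left_cancel this
    rcases hor with hjm | him
    · -- (j : ℕ) < m
      have hstd := hcE (Matrix.single ⟨(j : ℕ), by omega⟩ ⟨0, hm⟩ 1)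
      rw [Emat_std] at hstd
      have h1 := congrFun (congrFun hstd i) ⟨(0 : ℕ) + m + 1, by omega⟩
      rw [Matrix.mul_single_apply_same,
        Matrix.single_mul_apply_of_ne (h := by simp [Fin.ext_iff]; omega)] at h1
      have hj : (⟨(j : ℕ), by omega⟩ : Fin (2 * m + 1)) = j := by
        simp [Fin.ext_iff]
      rw [hj, mul_one] at h1
      exact h1
    · -- m + 1 ≤ (i : ℕ)
      have hib : (i : ℕ) - (m + 1) < m := by have := j.isLt; omega
      have hstd := hcE (Matrix.single ⟨0, hm⟩ ⟨(i : ℕ) - (m + 1), hib⟩ 1)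
      rw [Emat_std] at hstd
      have h1 := congrFun (congrFun hstd ⟨(0 : ℕ), by omega⟩) j
      have hBi : (⟨(i : ℕ) - (m + 1) + m + 1, by omega⟩ : Fin (2 * m + 1)) = i := by
        simp [Fin.ext_iff]; omega
      rw [hBi] at h1
      rw [Matrix.mul_single_apply_of_ne (hbj := by simp [Fin.ext_iff]; omega),
        Matrix.single_mul_apply_same, one_mul] at h1
      exact h1.symm
  · rintro ⟨hg, hz⟩
    refine ⟨hg, ?_⟩
    intro h
    have hgE : g * Emat p m h = Emat p m h := by
      ext i j
      rw [Matrix.mul_apply, Finset.sum_eq_single i]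
      · rw [hg.1 i, one_mul]
      · intro k _ hk
        by_cases hkm : (k : ℕ) < m ∧ m + 1 ≤ (j : ℕ)
        · have : g i k = 0 := by
            rcases lt_trichotomy (i : ℕ) (k : ℕ) with h' | h' | h'
            · exact hz i k h' (Or.inl (by omega))
            · exact absurd (Fin.ext h') (Ne.symm hk)
            · exact hg.2 i k h'
          rw [this, zero_mul]
        · rw [show Emat p m h k j = 0 from dif_neg hkm, mul_zero]
      · simp
    have hEg : Emat p m h * g = Emat p m h := by
      ext i j
      rw [Matrix.mul_apply, Finset.sum_eq_single j]
      · rw [hg.1 j, mul_one]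
      · intro k _ hk
        by_cases hkm : (i : ℕ) < m ∧ m + 1 ≤ (k : ℕ)
        · have : g k j = 0 := by
            rcases lt_trichotomy (k : ℕ) (j : ℕ) with h' | h' | h'
            · exact hz k j h' (Or.inr (by omega))
            · exact absurd (Fin.ext h') hk
            · exact hg.2 k j h'
          rw [this, mul_zero]
        · rw [show Emat p m h i k = 0 from dif_neg hkm, zero_mul]
      · simp
    rw [iota_eq, mul_add, add_mul, mul_one, one_mul, hgE, hEg]
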